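/- Let φ : A → B be a ring homomorphism such that Spec(B) → Spec(A) is an open immersion. Then there exist finitely many elements f₁,…,f_r of A such that the localization maps A_{f_i} → B_{φ(f_i)} are isomorphisms and the φ(f_i) generate the unit ideal in B. -/

import Mathlib

open AlgebraicGeometry CategoryTheory

lemma key_lemma {A B : Type} [CommRing A] [CommRing B] (φ : A →+* B)
    (h : IsOpenImmersion (Spec.map (CommRingCat.ofHom φ)))
    (f : A) (hf : (PrimeSpectrum.basicOpen f : Set (PrimeSpectrum A)) ⊆
      Set.range (Spec.map (CommRingCat.ofHom φ)).base) :
    Function.Bijective (IsLocalization.Away.map (Localization.Away f)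
      (Localization.Away (φ f)) φ f) := by
  set ψ : Localization.Away f →+* Localization.Away (φ f) :=
    IsLocalization.Away.map (Localization.Away f) (Localization.Away (φ f)) φ f with hψ
  have hcomm : ψ.comp (algebraMap A (Localization.Away f)) =
      (algebraMap B (Localization.Away (φ f))).comp φ :=
    IsLocalization.map_comp _
  have hsq : Spec.map (CommRingCat.ofHom ψ) ≫
      Spec.map (CommRingCat.ofHom (algebraMap A (Localization.Away f))) =
      Spec.map (CommRingCat.ofHom (algebraMap B (Localization.Away (φ f)))) ≫
      Spec.map (CommRingCat.ofHom φ) := by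
    rw [← Spec.map_comp, ← Spec.map_comp]
    congr 1
    rw [← CommRingCat.ofHom_comp, ← CommRingCat.ofHom_comp, hcomm]
  have hoi : IsOpenImmersion (Spec.map (CommRingCat.ofHom ψ)) := by
    have : IsOpenImmersion (Spec.map (CommRingCat.ofHom ψ) ≫
        Spec.map (CommRingCat.ofHom (algebraMap A (Localization.Away f)))) := by
      rw [hsq]; infer_instance
    exact IsOpenImmersion.of_comp _
      (Spec.map (CommRingCat.ofHom (algebraMap A (Localization.Away f))))
  -- surjectivity on points
  have hsurj : Function.Surjective (Spec.map (CommRingCat.ofHom ψ)).base := by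
    intro x
    have hx : PrimeSpectrum.comap (algebraMap A (Localization.Away f)) x ∈
        PrimeSpectrum.basicOpen f := by
      have : PrimeSpectrum.comap (algebraMap A (Localization.Away f)) x ∈
          Set.range (PrimeSpectrum.comap (algebraMap A (Localization.Away f))) := ⟨x, rfl⟩
      rwa [PrimeSpectrum.localization_away_comap_range (Localization.Away f) f] at this
    obtain ⟨y, hy⟩ := hf hx
    have hφf : y ∈ PrimeSpectrum.basicOpen (φ f) := by
      have : f ∉ (PrimeSpectrum.comap φ y).asIdeal := by
        rw [show PrimeSpectrum.comap φ y = (Spec.map (CommRingCat.ofHom φ)).base y from rfl, hy]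
        exact hx
      exact this
    obtain ⟨z, hz⟩ : y ∈ Set.range (PrimeSpectrum.comap
        (algebraMap B (Localization.Away (φ f)))) := by
      rw [PrimeSpectrum.localization_away_comap_range (Localization.Away (φ f)) (φ f)]
      exact hφf
    refine ⟨z, ?_⟩
    have hinj : Function.Injective
        (PrimeSpectrum.comap (algebraMap A (Localization.Away f))) :=
      PrimeSpectrum.localization_comap_injective _ (Submonoid.powers f)
    apply hinj
    have := congrArg (fun g => g.base z) hsq
    simp only [Scheme.Hom.comp_base, TopCat.comp_app] at this
    refine Eq.trans this ?_
    show (Spec.map (CommRingCat.ofHom φ)).base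
      (PrimeSpectrum.comap (algebraMap B (Localization.Away (φ f))) z) = _
    rw [hz, hy]
  have : Epi (Spec.map (CommRingCat.ofHom ψ)).base := (TopCat.epi_iff_surjective _).mpr hsurj
  have hiso : IsIso (Spec.map (CommRingCat.ofHom ψ)) := IsOpenImmersion.isIso _
  have : IsIso (Scheme.Spec.map (CommRingCat.ofHom ψ).op) := hiso
  have : IsIso (CommRingCat.ofHom ψ).op := isIso_of_reflects_iso _ Scheme.Spec
  have : IsIso (CommRingCat.ofHom ψ) := isIso_of_op _
  exact (ConcreteCategory.isIso_iff_bijective (CommRingCat.ofHom ψ)).mp this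

/-- If `φ : A → B` induces an open immersion `Spec B → Spec A`, then there exist finitely many
`f₁, …, f_r ∈ A` such that each induced map `A_{f i} → B_{φ (f i)}` is an isomorphism and the
`φ (f i)` generate the unit ideal of `B`. -/
theorem stmt_1 {A B : Type} [CommRing A] [CommRing B] (φ : A →+* B)
    (h : IsOpenImmersion (Spec.map (CommRingCat.ofHom φ))) :
    ∃ (r : ℕ) (f : Fin r → A),
      (∀ i, Function.Bijective
        (IsLocalization.Away.map (Localization.Away (f i))
          (Localization.Away (φ (f i))) φ (f i))) ∧
      Ideal.span (Set.range fun i => φ (f i)) = ⊤ := by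
  classical
  -- for every prime q of B, find a good f with φ f ∉ q
  have main : ∀ q : PrimeSpectrum B, ∃ f : A,
      Function.Bijective (IsLocalization.Away.map (Localization.Away f)
        (Localization.Away (φ f)) φ f) ∧ φ f ∉ q.asIdeal := by
    intro q
    have hopen : IsOpen (Set.range (Spec.map (CommRingCat.ofHom φ)).base) :=
      (Spec.map (CommRingCat.ofHom φ)).isOpenEmbedding.isOpen_range
    have hp : (Spec.map (CommRingCat.ofHom φ)).base q ∈
        Set.range (Spec.map (CommRingCat.ofHom φ)).base := ⟨q, rfl⟩
    obtain ⟨_, ⟨f, rfl⟩, hpf, hsub⟩ :=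
      PrimeSpectrum.isTopologicalBasis_basic_opens.isOpen_iff.mp hopen _ hp
    refine ⟨f, key_lemma φ h f hsub, ?_⟩
    exact hpf
  choose F hF1 hF2 using main
  -- the set of all good images generates the unit ideal
  set S : Set B := {b | ∃ f : A, Function.Bijective (IsLocalization.Away.map
      (Localization.Away f) (Localization.Away (φ f)) φ f) ∧ φ f = b} with hS
  have hspan : Ideal.span S = ⊤ := by
    by_contra hne
    obtain ⟨m, hm, hle⟩ := Ideal.exists_le_maximal _ hne
    have : φ (F ⟨m, hm.isPrime⟩) ∈ m :=
      hle (Ideal.subset_span ⟨F ⟨m, hm.isPrime⟩, hF1 _, rfl⟩)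
    exact hF2 ⟨m, hm.isPrime⟩ this
  have h1 : (1 : B) ∈ Ideal.span S := hspan ▸ Submodule.mem_top
  obtain ⟨t, hts, ht1⟩ := Submodule.mem_span_finite_of_mem_span h1
  choose g hg1 hg2 using fun b (hb : b ∈ t) => hts hb
  refine ⟨t.card, fun i => g (t.equivFin.symm i).1 (t.equivFin.symm i).2, ?_, ?_⟩
  · intro i; exact hg1 _ _
  · rw [Ideal.eq_top_iff_one]
    refine Ideal.span_mono ?_ ht1
    intro b hb
    refine ⟨t.equivFin ⟨b, hb⟩, ?_⟩
    simp [hg2]
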